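/- Let α ∈ (0,1), m ≥ 0, and f:[0,1]→[0,1] with f(1)=1, f'(1)=m, f twice continuously differentiable. Suppose sequences (u_x) ⊂ (0,1] and (a_x), (b_x) ⊂ [0,1] satisfy u_x = α(1−f(1−u_x)) + (1−α)a_x u_x + (1−α)b_x for all x, with u_x → 0, b_x > 0, a_x → a where αm + (1−α)a < 1. Then u_x / b_x → (1−α)/(1 − αm − (1−α)a) as x → ∞. -/

import Mathlib

open Filter Topology Set

/-- general first-order asymptotic transfer lemma. -/
theorem stmt_19 (f : ℝ → ℝ) (α m a : ℝ)
    (hα : α ∈ Ioo (0:ℝ) 1) (hm : 0 ≤ m)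
    (hdiff : ContDiff ℝ 2 f)
    (hmaps : MapsTo f (Icc 0 1) (Icc 0 1))
    (hf1 : f 1 = 1) (hf' : deriv f 1 = m)
    (u a' b : ℕ → ℝ)
    (hu : ∀ x, u x ∈ Ioc (0:ℝ) 1)
    (ha' : ∀ x, a' x ∈ Icc (0:ℝ) 1) (hb : ∀ x, b x ∈ Icc (0:ℝ) 1)
    (heq : ∀ x, u x = α * (1 - f (1 - u x)) + (1 - α) * a' x * u x + (1 - α) * b x)
    (hu0 : Tendsto u atTop (𝓝 0))
    (hbpos : ∀ x, 0 < b x)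
    (halim : Tendsto a' atTop (𝓝 a))
    (hsub : α * m + (1 - α) * a < 1) :
    Tendsto (fun x => u x / b x) atTop (𝓝 ((1 - α) / (1 - α * m - (1 - α) * a))) := by
  obtain ⟨hα0, hα1⟩ := hα
  have hL : 0 < 1 - α * m - (1 - α) * a := by linarith
  have hder : HasDerivAt f m 1 := by
    have h := ((hdiff.differentiable (by norm_num)) 1).hasDerivAt
    rwa [hf'] at h
  -- slope tendsto
  have h1 : Tendsto (fun x => (1:ℝ) - u x) atTop (𝓝[≠] 1) := by
    rw [tendsto_nhdsWithin_iff]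
    constructor
    · have : Tendsto (fun x => (1:ℝ) - u x) atTop (𝓝 (1 - 0)) :=
        tendsto_const_nhds.sub hu0
      simpa using this
    · filter_upwards with x
      have hx := (hu x).1
      simp only [mem_compl_iff, mem_singleton_iff]
      intro h
      have : u x = 0 := by linarith
      linarith
  have hslope : Tendsto (fun x => (1 - f (1 - u x)) / u x) atTop (𝓝 m) := by
    have h2 := (hasDerivAt_iff_tendsto_slope.mp hder).comp h1
    refine h2.congr fun x => ?_
    have hux : u x ≠ 0 := ne_of_gt (hu x).1
    simp only [Function.comp, slope, vsub_eq_sub, smul_eq_mul, hf1]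
    field_simp
    rw [show (1:ℝ) - u x - 1 = -u x by ring, div_eq_iff (neg_ne_zero.mpr hux)]
    ring
  set D : ℕ → ℝ := fun x => 1 - α * ((1 - f (1 - u x)) / u x) - (1 - α) * a' x with hD
  have hkey : ∀ x, u x * D x = (1 - α) * b x := by
    intro x
    have hux : u x ≠ 0 := ne_of_gt (hu x).1
    have h := heq x
    simp only [hD]
    field_simp
    linarith [heq x]
  have hDpos : ∀ x, 0 < D x := by
    intro x
    have h := hkey x
    have hbx := hbpos x
    have hux := (hu x).1
    nlinarith
  have hDlim : Tendsto D atTop (𝓝 (1 - α * m - (1 - α) * a)) := by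
    exact (tendsto_const_nhds.sub (hslope.const_mul α)).sub (halim.const_mul (1 - α))
  have hres : Tendsto (fun x => (1 - α) / D x) atTop
      (𝓝 ((1 - α) / (1 - α * m - (1 - α) * a))) :=
    tendsto_const_nhds.div hDlim (ne_of_gt hL)
  refine hres.congr fun x => ?_
  have hux : u x ≠ 0 := ne_of_gt (hu x).1
  have hbx : b x ≠ 0 := ne_of_gt (hbpos x)
  have hDx : D x ≠ 0 := ne_of_gt (hDpos x)
  have h := hkey x
  field_simp
  linarith [hkey x]
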